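/- Let m ≥ 2, 0 < ρ₁,…,ρ_m < 1 with ρ₁+⋯+ρ_m < 1, γ = (1−Σρᵢ)/(m−1), K the attractor of {φᵢ(x) = ρᵢx + Σ_{k<i}ρ_k + (i−1)γ}. If 1 − K ≠ K and f(x) = rx + t is a contractive similitude with f(K) ⊆ K, then f = φ_{i₁} ∘ ⋯ ∘ φ_{i_n} for some finite word i₁…i_n over {1,…,m}. -/

import Mathlib

/-- Composition `φ_{i₁} ∘ φ_{i₂} ∘ ⋯ ∘ φ_{i_n}` along a finite word. -/
def compWord {ι : Type*} (φ : ι → ℝ → ℝ) (w : List ι) : ℝ → ℝ :=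
  w.foldr (fun i g => φ i ∘ g) id

set_option maxHeartbeats 2000000 in
theorem equal_gap_nonsymmetric (m : ℕ) (hm : 2 ≤ m) (ρ : Fin m → ℝ)
    (hρ0 : ∀ i, 0 < ρ i) (hρ1 : ∀ i, ρ i < 1) (hsum : ∑ i, ρ i < 1)
    (K : Set ℝ) (hKc : IsCompact K) (hKne : K.Nonempty)
    (φ : Fin m → ℝ → ℝ)
    (hφ : ∀ i x, φ i x = ρ i * x + (∑ k ∈ Finset.univ.filter (· < i), ρ k) +
        (i : ℕ) * ((1 - ∑ j, ρ j) / (m - 1)))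
    (hK : K = ⋃ i, φ i '' K)
    (hsym : (fun x : ℝ => 1 - x) '' K ≠ K)
    (r t : ℝ) (hr0 : 0 < |r|) (hr1 : |r| < 1)
    (hf : (fun x : ℝ => r * x + t) '' K ⊆ K) :
    ∃ w : List (Fin m), ∀ x : ℝ, r * x + t = compWord φ w x := by
  have hm0 : 0 < m := by omega
  haveI : NeZero m := ⟨by omega⟩
  have hmR : (2:ℝ) ≤ (m:ℝ) := by exact_mod_cast hm
  set γ : ℝ := (1 - ∑ j, ρ j) / (m - 1) with hγdef
  have hγpos : 0 < γ := div_pos (by linarith) (by linarith)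
  have hγsum : ((m:ℝ) - 1) * γ = 1 - ∑ j, ρ j := by
    rw [hγdef, mul_comm, div_mul_cancel₀ _ (by linarith : (m:ℝ) - 1 ≠ 0)]
  set c : Fin m → ℝ := fun i => (∑ k ∈ Finset.univ.filter (· < i), ρ k) + (i:ℕ) * γ
    with hcdef
  have hφ' : ∀ i x, φ i x = ρ i * x + c i := by
    intro i x; rw [hφ, hcdef]; ring
  -- the zero and last indices
  set i₀ : Fin m := ⟨0, hm0⟩ with hi₀
  set iₗ : Fin m := ⟨m - 1, by omega⟩ with hiₗ
  have hc0 : c i₀ = 0 := by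
    rw [hcdef]
    have : Finset.univ.filter (· < i₀) = ∅ := by
      ext k; simp [Fin.lt_def, hi₀]
    simp [this, hi₀]
  have hclast : c iₗ + ρ iₗ = 1 := by
    have hfil : Finset.univ.filter (· < iₗ) = Finset.univ.erase iₗ := by
      ext k
      simp only [Finset.mem_filter, Finset.mem_erase, Finset.mem_univ, and_true, true_and]
      constructor
      · intro h; exact ne_of_lt h
      · intro h
        have hk := k.isLt
        have : (k:ℕ) ≠ m - 1 := fun hh => h (Fin.ext (by simp [hiₗ, hh]))
        exact Fin.lt_def.mpr (by simp [hiₗ]; omega)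
    have hsum' : ∑ k ∈ Finset.univ.filter (· < iₗ), ρ k = (∑ j, ρ j) - ρ iₗ := by
      rw [hfil]; exact Finset.sum_erase_eq_sub (Finset.mem_univ _)
    have hcast : ((iₗ:ℕ) : ℝ) = (m:ℝ) - 1 := by
      simp only [hiₗ]
      push_cast [Nat.cast_sub (by omega : 1 ≤ m)]
      ring
    rw [hcdef]; simp only [hsum', hcast]
    linarith [hγsum]
  -- successor formula
  have hcsucc : ∀ (i : Fin m) (h : (i:ℕ)+1 < m), c ⟨(i:ℕ)+1, h⟩ = c i + ρ i + γ := by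
    intro i h
    have hfil : Finset.univ.filter (· < (⟨(i:ℕ)+1, h⟩ : Fin m))
        = insert i (Finset.univ.filter (· < i)) := by
      ext k
      simp only [Finset.mem_filter, Finset.mem_insert, Finset.mem_univ, true_and, Fin.lt_def]
      constructor
      · intro hk
        rcases Nat.lt_succ_iff_lt_or_eq.mp hk with h' | h'
        · exact Or.inr h'
        · exact Or.inl (Fin.ext h')
      · rintro (rfl | hk)
        · exact Nat.lt_succ_self _
        · omega
    rw [hcdef]
    simp only [hfil]
    rw [Finset.sum_insert (by simp only [Finset.mem_filter, Finset.mem_univ, true_and]; exact lt_irrefl i)]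
    push_cast
    ring
  -- monotonicity with gap
  have hcmono : ∀ i j : Fin m, i < j → c i + ρ i + γ ≤ c j := by
    intro i j hij
    have hsub : insert i (Finset.univ.filter (· < i)) ⊆ Finset.univ.filter (· < j) := by
      intro k hk
      simp only [Finset.mem_insert, Finset.mem_filter, Finset.mem_univ, true_and] at hk ⊢
      rcases hk with rfl | hk
      · exact hij
      · exact lt_trans hk hij
    have hsum' : ρ i + ∑ k ∈ Finset.univ.filter (· < i), ρ k
        ≤ ∑ k ∈ Finset.univ.filter (· < j), ρ k := by
      calc ρ i + ∑ k ∈ Finset.univ.filter (· < i), ρ k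
          = ∑ k ∈ insert i (Finset.univ.filter (· < i)), ρ k := by
            rw [Finset.sum_insert (by simp only [Finset.mem_filter, Finset.mem_univ, true_and]; exact lt_irrefl i)]
        _ ≤ _ := Finset.sum_le_sum_of_subset_of_nonneg hsub
              (fun k _ _ => le_of_lt (hρ0 k))
    have hcast : ((i:ℕ):ℝ) + 1 ≤ ((j:ℕ):ℝ) := by
      have : (i:ℕ) + 1 ≤ (j:ℕ) := hij
      exact_mod_cast this
    rw [hcdef]
    simp only
    nlinarith [hγpos]
  -- basic bounds on c
  have hc_nonneg : ∀ i, 0 ≤ c i := by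
    intro i
    rw [hcdef]
    have h1 : (0:ℝ) ≤ ∑ k ∈ Finset.univ.filter (· < i), ρ k :=
      Finset.sum_nonneg fun k _ => le_of_lt (hρ0 k)
    have h2 : (0:ℝ) ≤ ((i:ℕ):ℝ) * γ := by positivity
    simpa using add_nonneg h1 h2
  have hd_le_one : ∀ i, c i + ρ i ≤ 1 := by
    intro i
    rcases eq_or_ne i iₗ with rfl | hne
    · exact le_of_eq hclast
    · have hlt : i < iₗ := by
        rw [Fin.lt_def]
        have := i.isLt
        have : (i:ℕ) ≠ m - 1 := fun hh => hne (Fin.ext (by simp [hiₗ, hh]))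
        simp only [hiₗ]
        omega
      have := hcmono i iₗ hlt
      have h2 := hρ0 iₗ
      linarith [hclast, hγpos]
  -- K pieces
  have hsubK : ∀ i, φ i '' K ⊆ K := by
    intro i
    intro y hy
    rw [hK]
    exact Set.mem_iUnion.mpr ⟨i, hy⟩
  have hmemK : ∀ y ∈ K, ∃ i, ∃ x ∈ K, y = φ i x := by
    intro y hy
    rw [hK] at hy
    obtain ⟨s, ⟨i, rfl⟩, hys⟩ := hy
    obtain ⟨x, hx, hxy⟩ := hys
    exact ⟨i, x, hx, hxy.symm⟩
  -- K ⊆ [0,1]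
  have hK01 : K ⊆ Set.Icc (0:ℝ) 1 := by
    have hbddA := hKc.bddAbove
    have hbddB := hKc.bddBelow
    set M := sSup K with hM
    set L := sInf K with hL
    have hMK : M ∈ K := hKc.sSup_mem hKne
    have hLK : L ∈ K := hKc.sInf_mem hKne
    have hM1 : M ≤ 1 := by
      obtain ⟨i, x, hx, hMx⟩ := hmemK M hMK
      have hxM : x ≤ M := le_csSup hbddA hx
      have hMx' : M = ρ i * x + c i := by rw [hMx, hφ']
      nlinarith [hρ1 i, hd_le_one i, hρ0 i, mul_le_mul_of_nonneg_left hxM (le_of_lt (hρ0 i))]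
    have hL0 : 0 ≤ L := by
      obtain ⟨i, x, hx, hLx⟩ := hmemK L hLK
      have hxL : L ≤ x := csInf_le hbddB hx
      have hLx' : L = ρ i * x + c i := by rw [hLx, hφ']
      nlinarith [hρ1 i, hc_nonneg i, hρ0 i, mul_le_mul_of_nonneg_left hxL (le_of_lt (hρ0 i))]
    intro x hx
    exact ⟨le_trans hL0 (csInf_le hbddB hx), le_trans (le_csSup hbddA hx) hM1⟩
  -- 0 ∈ K and 1 ∈ K
  have h0K : (0:ℝ) ∈ K := by
    have hbddB := hKc.bddBelow
    set L := sInf K with hL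
    have hLK : L ∈ K := hKc.sInf_mem hKne
    have hL0 : 0 ≤ L := (hK01 hLK).1
    have hφL : φ i₀ L ∈ K := hsubK i₀ ⟨L, hLK, rfl⟩
    have h1 : L ≤ φ i₀ L := csInf_le hbddB hφL
    rw [hφ' i₀ L, hc0] at h1
    have hLe : L = 0 := le_antisymm (by nlinarith [hρ1 i₀, hρ0 i₀]) hL0
    rwa [hLe] at hLK
  have h1K : (1:ℝ) ∈ K := by
    have hbddA := hKc.bddAbove
    set M := sSup K with hM
    have hMK : M ∈ K := hKc.sSup_mem hKne
    have hM1 : M ≤ 1 := (hK01 hMK).2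
    have hφM : φ iₗ M ∈ K := hsubK iₗ ⟨M, hMK, rfl⟩
    have h1 : φ iₗ M ≤ M := le_csSup hbddA hφM
    rw [hφ' iₗ M] at h1
    have hMe : M = 1 := le_antisymm hM1 (by nlinarith [hρ1 iₗ, hρ0 iₗ, hclast])
    rwa [hMe] at hMK
  -- endpoints of cylinders are in K
  have hcK : ∀ i, c i ∈ K := by
    intro i
    have : φ i 0 ∈ K := hsubK i ⟨0, h0K, rfl⟩
    rwa [hφ' i 0, mul_zero, zero_add] at this
  have hdK : ∀ i, c i + ρ i ∈ K := by
    intro i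
    have : φ i 1 ∈ K := hsubK i ⟨1, h1K, rfl⟩
    rwa [hφ' i 1, mul_one, add_comm] at this
  have hcylK : ∀ i, ∀ x ∈ K, c i ≤ φ i x ∧ φ i x ≤ c i + ρ i := by
    intro i x hx
    obtain ⟨hx0, hx1⟩ := hK01 hx
    rw [hφ' i x]
    constructor
    · nlinarith [hρ0 i]
    · nlinarith [hρ0 i]
  -- the maximal contraction ratio
  set R : ℝ := Finset.univ.sup' Finset.univ_nonempty ρ with hRdef
  have hρR : ∀ i, ρ i ≤ R := fun i => Finset.le_sup' ρ (Finset.mem_univ i)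
  have hRpos : 0 < R := lt_of_lt_of_le (hρ0 i₀) (hρR i₀)
  have hRlt1 : R < 1 := by
    rw [hRdef]
    exact (Finset.sup'_lt_iff _).mpr fun i _ => hρ1 i
  -- no gap of K inside [0,1] is longer than γ
  have maxgap : ∀ p q : ℝ, 0 ≤ p → q ≤ 1 → (∀ x ∈ K, ¬(p < x ∧ x < q)) → q - p ≤ γ := by
    intro p q hp hq hfree
    by_contra hcon
    push_neg at hcon
    have key : ∀ n : ℕ, ∀ p q : ℝ, 0 ≤ p → q ≤ 1 →
        (∀ x ∈ K, ¬(p < x ∧ x < q)) → γ < q - p → q - p ≤ R ^ n := by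
      intro n
      induction n with
      | zero => intro p q hp hq _ _; simpa using by linarith
      | succ n ih =>
        intro p q hp hq hfree hγlt
        have hpq : p < q := by linarith
        -- the largest cylinder started left of p
        set S : Finset (Fin m) := Finset.univ.filter (fun i => c i ≤ p) with hSdef
        have hSne : S.Nonempty := ⟨i₀, by simp [hSdef, hc0, hp]⟩
        set i : Fin m := S.max' hSne with hidef
        have hiS : i ∈ S := S.max'_mem hSne
        have hip : c i ≤ p := by
          have := hiS
          simp only [hSdef, Finset.mem_filter] at this
          exact this.2
        have hqd : q ≤ c i + ρ i := by
          by_contra hqd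
          push_neg at hqd
          have hdi : c i + ρ i ≤ p := by
            by_contra hdi
            push_neg at hdi
            exact hfree _ (hdK i) ⟨hdi, hqd⟩
          rcases eq_or_ne (i:ℕ) (m-1) with hlast | hlast
          · have : c i + ρ i = 1 := by
              have : i = iₗ := Fin.ext (by simp [hiₗ, hlast])
              rw [this]; exact hclast
            linarith
          · have hsuc : (i:ℕ) + 1 < m := by have := i.isLt; omega
            set j : Fin m := ⟨(i:ℕ)+1, hsuc⟩ with hjdef
            have hcj : c j = c i + ρ i + γ := hcsucc i hsuc
            have hcjq : c j < q := by linarith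
            have hcjp : c j ≤ p := by
              by_contra hcjp
              push_neg at hcjp
              exact hfree _ (hcK j) ⟨hcjp, hcjq⟩
            have hjS : j ∈ S := by simp [hSdef, hcjp]
            have := S.le_max' j hjS
            rw [← hidef] at this
            have : (j:ℕ) ≤ (i:ℕ) := this
            simp [hjdef] at this
        -- pull back through φ i
        have hρi := hρ0 i
        set p' : ℝ := (p - c i) / ρ i with hp'def
        set q' : ℝ := (q - c i) / ρ i with hq'def
        have hp'0 : 0 ≤ p' := div_nonneg (by linarith) (le_of_lt hρi)
        have hq'1 : q' ≤ 1 := by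
          rw [hq'def, div_le_one hρi]; linarith
        have hfree' : ∀ x ∈ K, ¬(p' < x ∧ x < q') := by
          rintro x hx ⟨h1, h2⟩
          have hφx : φ i x ∈ K := hsubK i ⟨x, hx, rfl⟩
          refine hfree _ hφx ⟨?_, ?_⟩
          · rw [hφ']
            rw [hp'def, div_lt_iff₀ hρi] at h1
            linarith
          · rw [hφ']
            rw [hq'def, lt_div_iff₀ hρi] at h2
            linarith
        have hgap' : γ < q' - p' := by
          have : q' - p' = (q - p) / ρ i := by rw [hp'def, hq'def]; ring
          rw [this]
          calc γ < q - p := hγlt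
            _ ≤ (q - p) / ρ i := by
                rw [le_div_iff₀ hρi]
                nlinarith [hρ1 i]
        have := ih p' q' hp'0 hq'1 hfree' hgap'
        have hqp' : q - p = ρ i * (q' - p') := by
          rw [hp'def, hq'def]; field_simp; ring
        rw [hqp', pow_succ]
        calc ρ i * (q' - p') ≤ R * R ^ n := by
              apply mul_le_mul (hρR i) this (by linarith) (le_of_lt hRpos)
          _ = R ^ n * R := mul_comm _ _
    have hto : Filter.Tendsto (fun n => R ^ n) Filter.atTop (nhds 0) :=
      tendsto_pow_atTop_nhds_zero_of_lt_one (le_of_lt hRpos) hRlt1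
    have hle : q - p ≤ 0 :=
      ge_of_tendsto hto (Filter.Eventually.of_forall fun n => key n p q hp hq hfree hcon)
    linarith
  -- the top-level gaps contain no point of K
  have gapfree : ∀ (i : Fin m) (h : (i:ℕ)+1 < m), ∀ x ∈ K,
      ¬(c i + ρ i < x ∧ x < c ⟨(i:ℕ)+1, h⟩) := by
    rintro i h x hx ⟨h1, h2⟩
    obtain ⟨k, y, hy, rfl⟩ := hmemK x hx
    obtain ⟨hk1, hk2⟩ := hcylK k y hy
    rcases lt_trichotomy k i with hki | rfl | hik
    · have := hcmono k i hki
      linarith [hρ0 i, hγpos]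
    · linarith
    · have hle : c ⟨(i:ℕ)+1, h⟩ ≤ c k := by
        rcases eq_or_ne k ⟨(i:ℕ)+1, h⟩ with rfl | hne
        · exact le_refl _
        · have : (⟨(i:ℕ)+1, h⟩ : Fin m) < k := by
            have h1 : (i:ℕ) < (k:ℕ) := hik
            have h2 : (k:ℕ) ≠ (i:ℕ)+1 := fun hh => hne (Fin.ext hh)
            exact Fin.lt_def.mpr (show (i:ℕ)+1 < (k:ℕ) by omega)
          linarith [hcmono _ _ this, hρ0 (⟨(i:ℕ)+1, h⟩ : Fin m), hγpos]
      linarith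
  -- a point of K inside cylinder i comes from K via φ i
  have samecyl : ∀ y ∈ K, ∀ i : Fin m, c i ≤ y → y ≤ c i + ρ i → ∃ x ∈ K, y = φ i x := by
    intro y hy i hcy hyd
    obtain ⟨k, x, hx, rfl⟩ := hmemK y hy
    obtain ⟨hk1, hk2⟩ := hcylK k x hx
    rcases lt_trichotomy k i with hki | rfl | hik
    · exfalso
      have := hcmono k i hki
      linarith [hγpos]
    · exact ⟨x, hx, rfl⟩
    · exfalso
      have := hcmono i k hik
      linarith [hγpos]
  -- f(K) ⊆ K forces |r| ≤ 1
  have hrle1 : ∀ r t : ℝ, ((fun x : ℝ => r * x + t) '' K ⊆ K) → |r| ≤ 1 := by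
    intro r t hfK
    have h0 : t ∈ K := by
      have : (fun x : ℝ => r * x + t) 0 ∈ K := hfK ⟨0, h0K, rfl⟩
      simpa using this
    have h1 : r + t ∈ K := by
      have : (fun x : ℝ => r * x + t) 1 ∈ K := hfK ⟨1, h1K, rfl⟩
      simpa using this
    obtain ⟨h0a, h0b⟩ := hK01 h0
    obtain ⟨h1a, h1b⟩ := hK01 h1
    rcases abs_cases r with ⟨he, _⟩ | ⟨he, _⟩ <;> rw [he] <;> linarith
  -- the peeling step: a strictly contracting similitude factors through some φ i
  have peel : ∀ r t : ℝ, 0 < |r| → |r| < 1 → ((fun x : ℝ => r * x + t) '' K ⊆ K) →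
      ∃ (i : Fin m) (r' t' : ℝ), (∀ x, r * x + t = φ i (r' * x + t')) ∧
        0 < |r'| ∧ ρ i * |r'| = |r| ∧ ((fun x : ℝ => r' * x + t') '' K ⊆ K) := by
    intro r t hr0 hr1 hfK
    have hrne : r ≠ 0 := fun h => by simp [h] at hr0
    have hf0 : t ∈ K := by
      have : (fun x : ℝ => r * x + t) 0 ∈ K := hfK ⟨0, h0K, rfl⟩
      simpa using this
    have hf1 : r + t ∈ K := by
      have : (fun x : ℝ => r * x + t) 1 ∈ K := hfK ⟨1, h1K, rfl⟩
      simpa using this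
    set e0 : ℝ := min t (r + t) with he0
    set e1 : ℝ := max t (r + t) with he1
    have he0K : e0 ∈ K := by
      rcases min_choice t (r + t) with h | h <;> rw [he0, h] <;> assumption
    have he1K : e1 ∈ K := by
      rcases max_choice t (r + t) with h | h <;> rw [he1, h] <;> assumption
    obtain ⟨j0, x0, hx0, hj0⟩ := hmemK e0 he0K
    obtain ⟨j1, x1, hx1, hj1⟩ := hmemK e1 he1K
    have hb0 : c j0 ≤ e0 ∧ e0 ≤ c j0 + ρ j0 := by rw [hj0]; exact hcylK j0 x0 hx0
    have hb1 : c j1 ≤ e1 ∧ e1 ≤ c j1 + ρ j1 := by rw [hj1]; exact hcylK j1 x1 hx1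
    have he01 : e0 ≤ e1 := min_le_max
    -- both endpoints lie in the same cylinder
    have hjj : j0 = j1 := by
      by_contra hne
      have hlt : j0 < j1 := by
        rcases lt_trichotomy j0 j1 with h | h | h
        · exact h
        · exact absurd h hne
        · exfalso
          have := hcmono j1 j0 h
          linarith [hb0.1, hb0.2, hb1.1, hb1.2, hγpos]
      have hsuc : (j0:ℕ) + 1 < m := by
        have h1 := Fin.lt_def.mp hlt
        have := j1.isLt
        omega
      set j : Fin m := ⟨(j0:ℕ)+1, hsuc⟩ with hjdef
      have hcj : c j = c j0 + ρ j0 + γ := hcsucc j0 hsuc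
      have hjj1 : c j ≤ c j1 := by
        rcases eq_or_ne j j1 with rfl | hne'
        · exact le_refl _
        · have : j < j1 := by
            have h1 := Fin.lt_def.mp hlt
            have h2 : (j1:ℕ) ≠ (j0:ℕ)+1 := fun hh => hne' (Fin.ext hh.symm)
            exact Fin.lt_def.mpr (show (j0:ℕ)+1 < (j1:ℕ) by omega)
          linarith [hcmono _ _ this, hρ0 j, hγpos]
      -- the gap (c j0 + ρ j0, c j) pulled back by f violates maxgap
      set a : ℝ := c j0 + ρ j0 with ha
      set b : ℝ := c j with hb
      have hae0 : e0 ≤ a := hb0.2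
      have hbe1 : b ≤ e1 := le_trans hjj1 hb1.1
      have hKgap : ∀ x ∈ K, ¬(a < x ∧ x < b) := gapfree j0 hsuc
      rcases lt_or_gt_of_ne hrne with hrneg | hrpos
      · -- r < 0 : e0 = r + t, e1 = t
        have he0' : e0 = r + t := min_eq_right (by linarith)
        have he1' : e1 = t := max_eq_left (by linarith)
        have habs : |r| = -r := abs_of_neg hrneg
        set p : ℝ := (b - t) / r with hp
        set q : ℝ := (a - t) / r with hq
        have hp0 : 0 ≤ p := by
          rw [hp]
          exact div_nonneg_of_nonpos (by linarith [he1'] : b - t ≤ 0) (le_of_lt hrneg)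
        have hq1 : q ≤ 1 := by
          rw [hq, div_le_one_of_neg hrneg]
          linarith [he0']
        have hfree : ∀ x ∈ K, ¬(p < x ∧ x < q) := by
          rintro x hx ⟨h1, h2⟩
          have hφx : r * x + t ∈ K := hfK ⟨x, hx, rfl⟩
          refine hKgap _ hφx ⟨?_, ?_⟩
          · rw [hq, lt_div_iff_of_neg hrneg] at h2
            linarith
          · rw [hp, div_lt_iff_of_neg hrneg] at h1
            linarith
        have := maxgap p q hp0 hq1 hfree
        have hqp : q - p = (b - a) / (-r) := by rw [hp, hq, div_neg]; ring
        have hba : b - a = γ := by rw [hcj]; ring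
        rw [hqp, hba] at this
        have hrpos' : 0 < -r := by linarith
        have : γ < γ / (-r) := by
          rw [lt_div_iff₀ hrpos']
          nlinarith [habs, hr1, hγpos]
        linarith [this]
      · -- r > 0 : e0 = t, e1 = r + t
        have he0' : e0 = t := min_eq_left (by linarith)
        have he1' : e1 = r + t := max_eq_right (by linarith)
        have habs : |r| = r := abs_of_pos hrpos
        set p : ℝ := (a - t) / r with hp
        set q : ℝ := (b - t) / r with hq
        have hp0 : 0 ≤ p := by
          rw [hp]
          apply div_nonneg (by linarith [he0']) (le_of_lt hrpos)
        have hq1 : q ≤ 1 := by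
          rw [hq, div_le_one hrpos]
          linarith [he1']
        have hfree : ∀ x ∈ K, ¬(p < x ∧ x < q) := by
          rintro x hx ⟨h1, h2⟩
          have hφx : r * x + t ∈ K := hfK ⟨x, hx, rfl⟩
          refine hKgap _ hφx ⟨?_, ?_⟩
          · rw [hp, div_lt_iff₀ hrpos] at h1
            linarith
          · rw [hq, lt_div_iff₀ hrpos] at h2
            linarith
        have := maxgap p q hp0 hq1 hfree
        have hqp : q - p = (b - a) / r := by rw [hp, hq]; ring
        have hba : b - a = γ := by rw [hcj]; ring
        rw [hqp, hba] at this
        have : γ < γ / r := by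
          rw [lt_div_iff₀ hrpos]
          nlinarith [habs, hr1, hγpos]
        linarith [this]
    -- now f(K) lands in cylinder j0
    subst hjj
    have himg : ∀ x ∈ K, ∃ y ∈ K, r * x + t = φ j0 y := by
      intro x hx
      have hfx : r * x + t ∈ K := hfK ⟨x, hx, rfl⟩
      obtain ⟨hx0', hx1'⟩ := hK01 hx
      have hlow : e0 ≤ r * x + t := by
        rcases le_or_gt r 0 with h | h
        · calc e0 ≤ r + t := min_le_right _ _
            _ ≤ r * x + t := by nlinarith
        · calc e0 ≤ t := min_le_left _ _
            _ ≤ r * x + t := by nlinarith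
      have hhigh : r * x + t ≤ e1 := by
        rcases le_or_gt r 0 with h | h
        · calc r * x + t ≤ t := by nlinarith
            _ ≤ e1 := le_max_left _ _
        · calc r * x + t ≤ r + t := by nlinarith
            _ ≤ e1 := le_max_right _ _
      exact samecyl _ hfx j0 (le_trans hb0.1 hlow) (le_trans hhigh hb1.2)
    obtain ⟨u, hu⟩ : ∃ u : ℝ, c j0 = u := ⟨_, rfl⟩
    have hρne : ρ j0 ≠ 0 := ne_of_gt (hρ0 j0)
    refine ⟨j0, r / ρ j0, (t - u) / ρ j0, ?_, ?_, ?_, ?_⟩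
    · intro x
      rw [hφ', hu]
      field_simp
      ring
    · rw [abs_div, abs_of_pos (hρ0 j0)]
      exact div_pos hr0 (hρ0 j0)
    · rw [abs_div, abs_of_pos (hρ0 j0), mul_comm, div_mul_cancel₀ _ hρne]
    · rintro y ⟨x, hx, rfl⟩
      obtain ⟨z, hz, hφz⟩ := himg x hx
      rw [hφ', hu] at hφz
      have hzeq : r / ρ j0 * x + (t - u) / ρ j0 = z := by
        field_simp
        linear_combination hφz
      show r / ρ j0 * x + (t - u) / ρ j0 ∈ K
      rw [hzeq]
      exact hz
  -- main induction on the depth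
  have main : ∀ n : ℕ, ∀ r t : ℝ, ((fun x : ℝ => r * x + t) '' K ⊆ K) → 0 < |r| →
      R ^ n < |r| → ∃ w : List (Fin m), ∀ x : ℝ, r * x + t = compWord φ w x := by
    intro n
    induction n with
    | zero =>
      intro r t hfK hr0' hRr
      have h1 : (1:ℝ) < |r| := by simpa using hRr
      exact absurd (hrle1 r t hfK) (not_le.mpr h1)
    | succ n ih =>
      intro r t hfK hr0' hRr
      have hrle := hrle1 r t hfK
      rcases lt_or_eq_of_le hrle with hlt | heq
      · obtain ⟨i, r', t', hcomp, hr'0, hr'abs, hfK'⟩ := peel r t hr0' hlt hfK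
        have hR' : R ^ n < |r'| := by
          by_contra hle
          push_neg at hle
          have h2 : |r| ≤ R * R ^ n := by
            rw [← hr'abs]
            exact mul_le_mul (hρR i) hle (abs_nonneg _) (le_of_lt hRpos)
          rw [pow_succ] at hRr
          nlinarith
        obtain ⟨w, hw⟩ := ih r' t' hfK' hr'0 hR'
        refine ⟨i :: w, fun x => ?_⟩
        have hcons : compWord φ (i :: w) x = φ i (compWord φ w x) := rfl
        rw [hcons, ← hw x]
        exact hcomp x
      · -- |r| = 1
        have h0 : t ∈ K := by
          have : (fun x : ℝ => r * x + t) 0 ∈ K := hfK ⟨0, h0K, rfl⟩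
          simpa using this
        have h1 : r + t ∈ K := by
          have : (fun x : ℝ => r * x + t) 1 ∈ K := hfK ⟨1, h1K, rfl⟩
          simpa using this
        rcases (abs_eq (by norm_num : (0:ℝ) ≤ 1)).mp heq with hr | hr
        · -- r = 1 : f is the identity
          subst hr
          have ht0 : 0 ≤ t := (hK01 h0).1
          have ht1 : t ≤ 0 := by
            have := (hK01 h1).2
            linarith
          have ht : t = 0 := le_antisymm ht1 ht0
          refine ⟨[], fun x => ?_⟩
          rw [ht]
          simp [compWord]
        · -- r = -1 : f is the reflection, contradicting non-symmetry
          exfalso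
          subst hr
          have ht1 : t ≤ 1 := (hK01 h0).2
          have ht0 : 1 ≤ t := by
            have := (hK01 h1).1
            linarith
          have ht : t = 1 := le_antisymm ht1 ht0
          have himg : (fun x : ℝ => 1 - x) '' K ⊆ K := by
            rintro y ⟨x, hx, rfl⟩
            have hmem : (fun x : ℝ => -1 * x + t) x ∈ K := hfK ⟨x, hx, rfl⟩
            have heq2 : -1 * x + t = 1 - x := by rw [ht]; ring
            simp only at hmem
            rwa [heq2] at hmem
          have hKeq : (fun x : ℝ => 1 - x) '' K = K := by
            apply Set.Subset.antisymm himg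
            intro x hx
            have h1x : 1 - x ∈ K := himg ⟨x, hx, rfl⟩
            exact ⟨1 - x, h1x, by ring⟩
          exact hsym hKeq
  obtain ⟨n, hn⟩ := exists_pow_lt_of_lt_one hr0 hRlt1
  exact main n r t hf hr0 hn
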